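/- (Theorem 4.1, case 0 < γ < 1: convergence of the one-dimensional implicit scheme.) Let γ ∈ (0,1), α ∈ (1,2], integers N ≥ 2 and N_t ≥ 1, reals τ > 0 and Δx > 0, nonnegative reals c_{i,k} (1 ≤ i ≤ N-1, 1 ≤ k ≤ N_t), and set ω_{i,k} = -Γ(2-γ)·τ^γ·κ_α·c_{i,k}/(Γ(4-α)·(Δx)^α) ≥ 0. Let R^k_i (1 ≤ i ≤ N-1, 1 ≤ k ≤ N_t) be reals and set R_max = max_{i,k} |R^k_i|. Suppose real numbers ε^k_i (0 ≤ i ≤ N, 0 ≤ k ≤ N_t) satisfy ε^0_i = 0 for all i, ε^k_0 = ε^k_N = 0 for 1 ≤ k ≤ N_t, and for all 1 ≤ i ≤ N-1 and 0 ≤ k ≤ N_t - 1: (1 - ω_{i,k+1}·g^{α,N}_{i,i})·ε^{k+1}_i - ω_{i,k+1}·Σ_{m=0, m≠i}^{N} g^{α,N}_{i,m}·ε^{k+1}_m = Σ_{s=0}^{k-1}(l_s - l_{s+1})·ε^{k-s}_i + R^{k+1}_i. Then for every 1 ≤ k ≤ N_t: max_{0≤i≤N} |ε^k_i| ≤ R_max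 / l_{k-1} ≤ (k^γ/(1-γ))·R_max. In particular, if T > 0, N_t·τ ≤ T and |R^k_i| ≤ C·τ^γ·(τ^{2-γ} + (Δx)^2) for all i, k and some constant C > 0, then max_{0≤i≤N} |ε^k_i| ≤ (C·T^γ/(1-γ))·(τ^{2-γ} + (Δx)^2) for every 0 ≤ k ≤ N_t. -/

import Mathlib

/-- The coefficients `a^ν_{j,m}` of the second-order discretization of the left
Riemann–Liouville fractional derivative. All powers are real powers. -/
noncomputable def aCoef (ν : ℝ) (j m : ℕ) : ℝ :=
  if m = j then 1
  else if m = 0 then ((j : ℝ) - 1) ^ (3 - ν) - (j : ℝ) ^ (2 - ν) * ((j : ℝ) - 3 + ν)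
  else ((j : ℝ) - (m : ℝ) + 1) ^ (3 - ν) - 2 * ((j : ℝ) - (m : ℝ)) ^ (3 - ν)
    + ((j : ℝ) - (m : ℝ) - 1) ^ (3 - ν)

/-- The coefficients `b^ν_{j,m}` of the second-order discretization of the right
Riemann–Liouville fractional derivative on a grid with `N` subintervals. -/
noncomputable def bCoef (ν : ℝ) (N j m : ℕ) : ℝ :=
  if m = j then 1
  else if m = N then (3 - ν - (N : ℝ) + (j : ℝ)) * ((N : ℝ) - (j : ℝ)) ^ (2 - ν)
    + ((N : ℝ) - (j : ℝ) - 1) ^ (3 - ν)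
  else ((m : ℝ) - (j : ℝ) + 1) ^ (3 - ν) - 2 * ((m : ℝ) - (j : ℝ)) ^ (3 - ν)
    + ((m : ℝ) - (j : ℝ) - 1) ^ (3 - ν)

/-- The coefficients `p^ν_{i,m}` (left-derivative part), for `1 ≤ i ≤ N-1`. -/
noncomputable def pCoef (ν : ℝ) (i m : ℕ) : ℝ :=
  if m < i then aCoef ν (i - 1) m - 2 * aCoef ν i m + aCoef ν (i + 1) m
  else if m = i then -2 * aCoef ν i i + aCoef ν (i + 1) i
  else if m = i + 1 then aCoef ν (i + 1) (i + 1)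
  else 0

/-- The coefficients `q^ν_{i,m}` (right-derivative part), for `1 ≤ i ≤ N-1`. -/
noncomputable def qCoef (ν : ℝ) (N i m : ℕ) : ℝ :=
  if m + 1 < i then 0
  else if m + 1 = i then bCoef ν N (i - 1) (i - 1)
  else if m = i then -2 * bCoef ν N i i + bCoef ν N (i - 1) i
  else bCoef ν N (i - 1) m - 2 * bCoef ν N i m + bCoef ν N (i + 1) m

/-- The Riesz-derivative difference coefficients `g^{ν,N}_{i,m} = p^ν_{i,m} + q^ν_{i,m}`. -/
noncomputable def gCoef (ν : ℝ) (N i m : ℕ) : ℝ := pCoef ν i m + qCoef ν N i m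

/-- The L1 coefficients `l_s = (s+1)^(1-γ) - s^(1-γ)` of the Caputo discretization. -/
noncomputable def lCoef (γ : ℝ) (s : ℕ) : ℝ := ((s : ℝ) + 1) ^ (1 - γ) - (s : ℝ) ^ (1 - γ)

/-- The Riesz constant `κ_ν = 1 / (2 cos(νπ/2))`. -/
noncomputable def kappa (ν : ℝ) : ℝ := 1 / (2 * Real.cos (ν * Real.pi / 2))

/-- The maximum of `|v i|` over `0 ≤ i ≤ N`. -/
noncomputable def maxAbs (N : ℕ) (v : ℕ → ℝ) : ℝ :=
  (Finset.range (N + 1)).sup' Finset.nonempty_range_add_one fun i => |v i|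

/-- The maximum of `|v i j|` over `0 ≤ i ≤ Nx`, `0 ≤ j ≤ Ny`. -/
noncomputable def maxAbs2 (Nx Ny : ℕ) (v : ℕ → ℕ → ℝ) : ℝ :=
  ((Finset.range (Nx + 1)) ×ˢ (Finset.range (Ny + 1))).sup'
    (Finset.nonempty_range_add_one.product Finset.nonempty_range_add_one) fun p => |v p.1 p.2|

open Real Set

/-- Second difference of `x ^ p` (as `rpow`). -/
noncomputable def Dfn (p : ℝ) (x : ℝ) : ℝ := (x+1)^p - 2*(x^p) + (x-1)^p

lemma rpow_midpoint_nonpos {p a b : ℝ} (hp : p ≤ 0) (ha : 0 < a) (hb : 0 < b) :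
    2 * (((a+b)/2) ^ p) ≤ a ^ p + b ^ p := by
  have hab : 0 < a * b := mul_pos ha hb
  have hs0 : 0 < Real.sqrt (a*b) := Real.sqrt_pos.2 hab
  have hs : Real.sqrt (a*b) ≤ (a+b)/2 := by
    rw [show (a+b)/2 = Real.sqrt (((a+b)/2)^2) from (Real.sqrt_sq (by positivity)).symm]
    apply Real.sqrt_le_sqrt; nlinarith [sq_nonneg (a-b)]
  have h2 : ((a+b)/2)^p ≤ (Real.sqrt (a*b))^p :=
    Real.rpow_le_rpow_of_nonpos hs0 hs hp
  have h3 : Real.sqrt (a*b) ^ p = a^(p/2) * b^(p/2) := by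
    rw [Real.sqrt_eq_rpow, ← Real.rpow_mul hab.le,
      show (1/2:ℝ) * p = p/2 by ring, Real.mul_rpow ha.le hb.le]
  have ha2 : a^(p/2) * a^(p/2) = a^p := by
    rw [← Real.rpow_add ha]; norm_num
  have hb2 : b^(p/2) * b^(p/2) = b^p := by
    rw [← Real.rpow_add hb]; norm_num
  nlinarith [sq_nonneg (a^(p/2) - b^(p/2)), h2, h3]

lemma rpow_midpoint_one_le {p a b : ℝ} (hp : 1 ≤ p) (ha : 0 ≤ a) (hb : 0 ≤ b) :
    2 * (((a+b)/2) ^ p) ≤ a ^ p + b ^ p := by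
  have := (convexOn_rpow hp).2 (Set.mem_Ici.2 ha) (Set.mem_Ici.2 hb)
    (le_of_lt one_half_pos) (le_of_lt one_half_pos) (by norm_num)
  simp only [smul_eq_mul] at this
  calc 2 * (((a+b)/2) ^ p) = 2 * ((1/2*a + 1/2*b) ^ p) := by ring_nf
    _ ≤ 2 * (1/2 * a^p + 1/2 * b^p) := by linarith
    _ = a^p + b^p := by ring

lemma rpow_midpoint_le_one {p a b : ℝ} (hp0 : 0 ≤ p) (hp : p ≤ 1) (ha : 0 ≤ a) (hb : 0 ≤ b) :
    a ^ p + b ^ p ≤ 2 * (((a+b)/2) ^ p) := by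
  have := (Real.concaveOn_rpow hp0 hp).2 (Set.mem_Ici.2 ha) (Set.mem_Ici.2 hb)
    (le_of_lt one_half_pos) (le_of_lt one_half_pos) (by norm_num)
  simp only [smul_eq_mul] at this
  calc a^p + b^p = 2 * (1/2 * a^p + 1/2 * b^p) := by ring
    _ ≤ 2 * ((1/2*a + 1/2*b) ^ p) := by linarith
    _ = 2 * (((a+b)/2) ^ p) := by ring_nf

lemma Dfn_nonneg_of_nonpos {p x : ℝ} (hp : p ≤ 0) (hx : 1 < x) : 0 ≤ Dfn p x := by
  have := rpow_midpoint_nonpos hp (show (0:ℝ) < x - 1 by linarith) (show (0:ℝ) < x + 1 by linarith)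
  rw [show (x - 1 + (x + 1)) / 2 = x by ring] at this
  unfold Dfn; linarith

lemma Dfn_nonneg_of_one_le {p x : ℝ} (hp : 1 ≤ p) (hx : 1 ≤ x) : 0 ≤ Dfn p x := by
  have := rpow_midpoint_one_le hp (show (0:ℝ) ≤ x - 1 by linarith) (show (0:ℝ) ≤ x + 1 by linarith)
  rw [show (x - 1 + (x + 1)) / 2 = x by ring] at this
  unfold Dfn; linarith

lemma Dfn_nonpos_of_le_one {p x : ℝ} (hp0 : 0 ≤ p) (hp : p ≤ 1) (hx : 1 ≤ x) : Dfn p x ≤ 0 := by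
  have := rpow_midpoint_le_one hp0 hp (show (0:ℝ) ≤ x - 1 by linarith)
    (show (0:ℝ) ≤ x + 1 by linarith)
  rw [show (x - 1 + (x + 1)) / 2 = x by ring] at this
  unfold Dfn; linarith

lemma hasDerivAt_Dfn {p x : ℝ} (hx : 1 < x) : HasDerivAt (Dfn p) (p * Dfn (p-1) x) x := by
  have h0 : (0:ℝ) < x := lt_trans one_pos hx
  have h1 : HasDerivAt (fun y : ℝ => (y+1)^p) (1 * p * (x+1)^(p-1)) x :=
    HasDerivAt.rpow_const ((hasDerivAt_id x).add_const 1) (Or.inl (by positivity))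
  have h2 : HasDerivAt (fun y : ℝ => (y:ℝ)^p) (p * x^(p-1)) x :=
    Real.hasDerivAt_rpow_const (Or.inl h0.ne')
  have h3 : HasDerivAt (fun y : ℝ => (y-1)^p) (1 * p * (x-1)^(p-1)) x :=
    HasDerivAt.rpow_const ((hasDerivAt_id x).sub_const 1) (Or.inl (by nlinarith))
  have := (h1.sub (h2.const_mul 2)).add h3
  refine this.congr_deriv ?_
  unfold Dfn; ring

lemma continuousOn_Dfn {p : ℝ} (hp : 0 ≤ p) : ContinuousOn (Dfn p) (Set.Ici 1) := by
  intro x _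
  have c1 : ContinuousAt (fun y : ℝ => (y+1)^p) x :=
    (Real.continuousAt_rpow_const _ p (Or.inr hp)).comp
      ((continuous_id.add continuous_const).continuousAt)
  have c2 : ContinuousAt (fun y : ℝ => (y:ℝ)^p) x :=
    Real.continuousAt_rpow_const _ p (Or.inr hp)
  have c3 : ContinuousAt (fun y : ℝ => (y-1)^p) x :=
    (Real.continuousAt_rpow_const _ p (Or.inr hp)).comp
      ((continuous_id.sub continuous_const).continuousAt)
  exact ((c1.sub (c2.const_mul 2)).add c3).continuousWithinAt

lemma Dfn_monotoneOn {σ : ℝ} (h1 : 1 ≤ σ) (h2 : σ ≤ 2) :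
    MonotoneOn (Dfn (σ-1)) (Set.Ici 1) := by
  apply monotoneOn_of_deriv_nonneg (convex_Ici 1) (continuousOn_Dfn (by linarith))
  · intro x hx
    rw [interior_Ici] at hx
    exact (hasDerivAt_Dfn hx).differentiableAt.differentiableWithinAt
  · intro x hx
    rw [interior_Ici] at hx
    rw [(hasDerivAt_Dfn hx).deriv]
    have : σ - 1 - 1 = σ - 2 := by ring
    rw [this]
    exact mul_nonneg (by linarith) (Dfn_nonneg_of_nonpos (by linarith) hx)

lemma Dfn_antitoneOn {σ : ℝ} (h1 : 1 ≤ σ) (h2 : σ ≤ 2) :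
    AntitoneOn (Dfn σ) (Set.Ici 1) := by
  apply antitoneOn_of_deriv_nonpos (convex_Ici 1) (continuousOn_Dfn (by linarith))
  · intro x hx
    rw [interior_Ici] at hx
    exact (hasDerivAt_Dfn hx).differentiableAt.differentiableWithinAt
  · intro x hx
    rw [interior_Ici] at hx
    rw [(hasDerivAt_Dfn hx).deriv]
    exact mul_nonpos_of_nonneg_of_nonpos (by linarith)
      (Dfn_nonpos_of_le_one (by linarith) (by linarith) hx.le)

lemma Gfn_monotoneOn {σ : ℝ} (h1 : 1 ≤ σ) (h2 : σ ≤ 2) :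
    MonotoneOn (fun x => Dfn σ (x+1) - Dfn σ x) (Set.Ici 1) := by
  apply monotoneOn_of_deriv_nonneg (convex_Ici 1)
  · apply ContinuousOn.sub
    · apply (continuousOn_Dfn (by linarith)).comp
        ((continuous_id.add continuous_const).continuousOn)
      intro x hx
      simp only [Set.mem_Ici, id_eq, Pi.add_apply] at *
      linarith
    · exact continuousOn_Dfn (by linarith)
  · intro x hx
    rw [interior_Ici] at hx
    simp only [Set.mem_Ioi] at hx
    have hD1 : HasDerivAt (fun y : ℝ => Dfn σ (y+1)) (σ * Dfn (σ-1) (x+1) * 1) x :=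
      (hasDerivAt_Dfn (by linarith)).comp x ((hasDerivAt_id x).add_const 1)
    exact ((hD1.sub (hasDerivAt_Dfn hx)).differentiableAt).differentiableWithinAt
  · intro x hx
    rw [interior_Ici] at hx
    simp only [Set.mem_Ioi] at hx
    have hD1 : HasDerivAt (fun y : ℝ => Dfn σ (y+1)) (σ * Dfn (σ-1) (x+1) * 1) x :=
      (hasDerivAt_Dfn (by linarith)).comp x ((hasDerivAt_id x).add_const 1)
    rw [show deriv (fun x => Dfn σ (x + 1) - Dfn σ x) x = _ from (hD1.sub (hasDerivAt_Dfn hx)).deriv]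
    have hmono := Dfn_monotoneOn h1 h2 (Set.mem_Ici.2 hx.le)
      (Set.mem_Ici.2 (show (1:ℝ) ≤ x + 1 by linarith)) (by linarith)
    have hσ : 0 ≤ σ := by linarith
    nlinarith

/-- Fourth-difference nonnegativity. -/
lemma Dfn_secdiff_nonneg {σ x : ℝ} (h1 : 1 ≤ σ) (h2 : σ ≤ 2) (hx : 2 ≤ x) :
    0 ≤ Dfn σ (x-1) - 2 * Dfn σ x + Dfn σ (x+1) := by
  have hm := Gfn_monotoneOn h1 h2 (Set.mem_Ici.2 (show (1:ℝ) ≤ x - 1 by linarith))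
    (Set.mem_Ici.2 (show (1:ℝ) ≤ x by linarith)) (by linarith)
  simp only [show x - 1 + 1 = x by ring] at hm
  linarith

/-- Third-difference nonpositivity: `Dfn σ` decreasing. -/
lemma Dfn_succ_le {σ x : ℝ} (h1 : 1 ≤ σ) (h2 : σ ≤ 2) (hx : 1 ≤ x) :
    Dfn σ (x+1) ≤ Dfn σ x :=
  Dfn_antitoneOn h1 h2 (Set.mem_Ici.2 hx)
    (Set.mem_Ici.2 (by linarith)) (by linarith)


/-- Key scalar inequality `3^σ - 4·2^σ + 7 ≥ 0` on `[1,2]`. -/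
lemma K1_ineq {σ : ℝ} (h1 : 1 ≤ σ) (h2 : σ ≤ 2) :
    0 ≤ (3:ℝ)^σ - 4*(2:ℝ)^σ + 7 := by
  have hlog : (9:ℝ) * Real.log 3 ≤ 16 * Real.log 2 := by
    have h1 : Real.log ((3:ℝ)^(9:ℕ)) ≤ Real.log ((2:ℝ)^(16:ℕ)) := by
      apply Real.log_le_log (by positivity)
      norm_num
    rwa [Real.log_pow, Real.log_pow] at h1
  have key : AntitoneOn (fun s : ℝ => (3:ℝ)^s - 4*(2:ℝ)^s + 7) (Set.Icc 1 2) := by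
    apply antitoneOn_of_deriv_nonpos (convex_Icc 1 2)
    · apply ContinuousOn.add (ContinuousOn.sub _ _) continuousOn_const
      · exact fun x _ => (Real.continuousAt_const_rpow (by norm_num : (3:ℝ) ≠ 0)).continuousWithinAt
      · exact ContinuousOn.const_smul (fun x _ => (Real.continuousAt_const_rpow
          (by norm_num : (2:ℝ) ≠ 0)).continuousWithinAt) (4:ℝ) |>.congr (fun x _ => by simp [smul_eq_mul])
    · intro x hx
      exact ((((Real.hasStrictDerivAt_const_rpow (by norm_num : (0:ℝ) < 3) x).hasDerivAt).sub
        (((Real.hasStrictDerivAt_const_rpow (by norm_num : (0:ℝ) < 2) x).hasDerivAt).const_mul 4)).add_const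
        7).differentiableAt.differentiableWithinAt
    · intro x hx
      rw [interior_Icc] at hx
      obtain ⟨hx1, hx2⟩ := hx
      rw [show deriv (fun s : ℝ => (3:ℝ)^s - 4*(2:ℝ)^s + 7) x = _ from
        (((Real.hasStrictDerivAt_const_rpow (by norm_num : (0:ℝ) < 3) x).hasDerivAt).sub
        (((Real.hasStrictDerivAt_const_rpow (by norm_num : (0:ℝ) < 2) x).hasDerivAt).const_mul 4)).add_const
        7 |>.deriv]
      -- goal: 3^x * log 3 - 4 * (2^x * log 2) ≤ 0
      have h32 : (3:ℝ)^x = (2:ℝ)^x * ((3/2):ℝ)^x := by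
        rw [← Real.mul_rpow (by norm_num) (by norm_num)]; norm_num
      have h94 : ((3/2):ℝ)^x ≤ 9/4 := by
        have := Real.rpow_le_rpow_of_exponent_le (by norm_num : (1:ℝ) ≤ 3/2) hx2.le
        rwa [show ((3/2:ℝ))^(2:ℝ) = 9/4 by
          rw [show (2:ℝ) = ((2:ℕ):ℝ) by norm_num, Real.rpow_natCast]; norm_num] at this
      have hl3 : 0 ≤ Real.log 3 := Real.log_nonneg (by norm_num)
      have h2x : 0 < (2:ℝ)^x := Real.rpow_pos_of_pos (by norm_num) x
      nlinarith [mul_le_mul_of_nonneg_right (mul_le_mul_of_nonneg_left h94 h2x.le) hl3]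
  have h9 : ((3:ℝ))^(2:ℝ) - 4*(2:ℝ)^(2:ℝ) + 7 = 0 := by
    rw [show (2:ℝ) = ((2:ℕ):ℝ) by norm_num, Real.rpow_natCast, Real.rpow_natCast]
    norm_num
  have := key (Set.mem_Icc.2 ⟨h1, h2⟩) (Set.mem_Icc.2 ⟨by norm_num, le_refl 2⟩) h2
  simp only at this
  linarith

section coef
variable {ν : ℝ} {N i m : ℕ}

lemma aCoef_diag (ν : ℝ) (j : ℕ) : aCoef ν j j = 1 := if_pos rfl

lemma bCoef_diag (ν : ℝ) (N j : ℕ) : bCoef ν N j j = 1 := if_pos rfl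

lemma aCoef_off (ν : ℝ) {j m : ℕ} (h1 : 1 ≤ m) (h2 : m < j) :
    aCoef ν j m = Dfn (3-ν) ((j:ℝ) - m) := by
  unfold aCoef Dfn
  rw [if_neg (by omega : ¬ m = j), if_neg (by omega : ¬ m = 0)]

lemma bCoef_off (ν : ℝ) {N j m : ℕ} (h1 : j < m) (h2 : m < N) :
    bCoef ν N j m = Dfn (3-ν) ((m:ℝ) - j) := by
  unfold bCoef Dfn
  rw [if_neg (by omega : ¬ m = j), if_neg (by omega : ¬ m = N)]

lemma Dfn_one {ν : ℝ} (hν : ν ≤ 2) : Dfn (3-ν) 1 = (2:ℝ)^(3-ν) - 2 := by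
  unfold Dfn
  rw [show ((1:ℝ)+1) = 2 by norm_num, show ((1:ℝ)-1) = 0 by norm_num,
    Real.zero_rpow (by linarith : (3:ℝ)-ν ≠ 0), Real.one_rpow]
  ring

lemma Dfn_two : Dfn (3-ν) 2 = (3:ℝ)^(3-ν) - 2*(2:ℝ)^(3-ν) + 1 := by
  unfold Dfn
  norm_num

lemma gCoef_diag_eq (hν : ν ≤ 2) (hi1 : 1 ≤ i) (hiN : i ≤ N-1) (hN : 2 ≤ N) :
    gCoef ν N i i = 2*(2:ℝ)^(3-ν) - 8 := by
  unfold gCoef pCoef qCoef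
  rw [if_neg (lt_irrefl i), if_pos rfl, if_neg (by omega : ¬ i + 1 < i),
    if_neg (by omega : ¬ i + 1 = i), if_pos rfl]
  rw [aCoef_diag, bCoef_diag, aCoef_off ν hi1 (by omega),
    bCoef_off ν (by omega : i - 1 < i) (by omega : i < N)]
  have c1 : ((i+1:ℕ):ℝ) - (i:ℝ) = 1 := by push_cast; ring
  have c2 : ((i:ℕ):ℝ) - ((i-1:ℕ):ℝ) = 1 := by
    rw [Nat.cast_sub hi1]; push_cast; ring
  rw [c1, c2, Dfn_one hν]
  ring

lemma gCoef_sub_eq (hν : ν ≤ 2) (hi2 : 2 ≤ i) (hiN : i ≤ N-1) (hN : 2 ≤ N) :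
    gCoef ν N i (i-1) = (3:ℝ)^(3-ν) - 4*(2:ℝ)^(3-ν) + 7 := by
  unfold gCoef pCoef qCoef
  rw [if_pos (by omega : i - 1 < i), if_neg (by omega : ¬ i - 1 + 1 < i),
    if_pos (by omega : i - 1 + 1 = i)]
  have e1 : aCoef ν (i-1) (i-1) = 1 := aCoef_diag ν (i-1)
  have e2 : aCoef ν i (i-1) = Dfn (3-ν) ((i:ℝ) - ((i-1:ℕ):ℝ)) := aCoef_off ν (by omega) (by omega)
  have e3 : aCoef ν (i+1) (i-1) = Dfn (3-ν) (((i+1:ℕ):ℝ) - ((i-1:ℕ):ℝ)) :=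
    aCoef_off ν (by omega) (by omega)
  have e4 : bCoef ν N (i-1) (i-1) = 1 := bCoef_diag ν N (i-1)
  rw [e1, e2, e3, e4]
  have c2 : ((i:ℕ):ℝ) - ((i-1:ℕ):ℝ) = 1 := by rw [Nat.cast_sub (by omega)]; push_cast; ring
  have c3 : ((i+1:ℕ):ℝ) - ((i-1:ℕ):ℝ) = 2 := by rw [Nat.cast_sub (by omega)]; push_cast; ring
  rw [c2, c3, Dfn_one hν, Dfn_two]
  ring

lemma gCoef_super_eq (hν : ν ≤ 2) (hi1 : 1 ≤ i) (hiN : i + 1 ≤ N-1) (hN : 2 ≤ N) :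
    gCoef ν N i (i+1) = (3:ℝ)^(3-ν) - 4*(2:ℝ)^(3-ν) + 7 := by
  unfold gCoef pCoef qCoef
  rw [if_neg (by omega : ¬ i + 1 < i), if_neg (by omega : ¬ i + 1 = i), if_pos rfl,
    if_neg (by omega : ¬ i + 1 + 1 < i), if_neg (by omega : ¬ i + 1 + 1 = i),
    if_neg (by omega : ¬ i + 1 = i)]
  have e1 : aCoef ν (i+1) (i+1) = 1 := aCoef_diag ν (i+1)
  have e2 : bCoef ν N (i-1) (i+1) = Dfn (3-ν) (((i+1:ℕ):ℝ) - ((i-1:ℕ):ℝ)) :=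
    bCoef_off ν (by omega) (by omega)
  have e3 : bCoef ν N i (i+1) = Dfn (3-ν) (((i+1:ℕ):ℝ) - ((i:ℕ):ℝ)) :=
    bCoef_off ν (by omega) (by omega)
  have e4 : bCoef ν N (i+1) (i+1) = 1 := bCoef_diag ν N (i+1)
  rw [e1, e2, e3, e4]
  have c2 : ((i+1:ℕ):ℝ) - ((i-1:ℕ):ℝ) = 2 := by rw [Nat.cast_sub (by omega)]; push_cast; ring
  have c3 : ((i+1:ℕ):ℝ) - ((i:ℕ):ℝ) = 1 := by push_cast; ring
  rw [c2, c3, Dfn_one hν, Dfn_two]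
  ring

lemma gCoef_farleft_eq (hm1 : 1 ≤ m) (hmi : m + 2 ≤ i) :
    gCoef ν N i m
      = Dfn (3-ν) (((i:ℝ) - m) - 1) - 2 * Dfn (3-ν) ((i:ℝ) - m) + Dfn (3-ν) (((i:ℝ) - m) + 1) := by
  unfold gCoef pCoef qCoef
  rw [if_pos (by omega : m < i), if_pos (by omega : m + 1 < i)]
  rw [aCoef_off ν hm1 (by omega), aCoef_off ν hm1 (by omega), aCoef_off ν hm1 (by omega)]
  have c1 : ((i-1:ℕ):ℝ) - (m:ℝ) = ((i:ℝ) - m) - 1 := by rw [Nat.cast_sub (by omega)]; push_cast; ring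
  have c2 : ((i+1:ℕ):ℝ) - (m:ℝ) = ((i:ℝ) - m) + 1 := by push_cast; ring
  rw [c1, c2]
  ring

lemma gCoef_farright_eq (hi1 : 1 ≤ i) (hmi : i + 2 ≤ m) (hmN : m ≤ N - 1) (hN : 2 ≤ N) :
    gCoef ν N i m
      = Dfn (3-ν) (((m:ℝ) - i) - 1) - 2 * Dfn (3-ν) ((m:ℝ) - i) + Dfn (3-ν) (((m:ℝ) - i) + 1) := by
  unfold gCoef pCoef qCoef
  rw [if_neg (by omega : ¬ m < i), if_neg (by omega : ¬ m = i), if_neg (by omega : ¬ m = i + 1),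
    if_neg (by omega : ¬ m + 1 < i), if_neg (by omega : ¬ m + 1 = i), if_neg (by omega : ¬ m = i)]
  rw [bCoef_off ν (by omega) (by omega : m < N), bCoef_off ν (by omega) (by omega : m < N),
    bCoef_off ν (by omega) (by omega : m < N)]
  have c1 : (m:ℝ) - ((i-1:ℕ):ℝ) = ((m:ℝ) - i) + 1 := by rw [Nat.cast_sub (by omega)]; push_cast; ring
  have c2 : (m:ℝ) - ((i+1:ℕ):ℝ) = ((m:ℝ) - i) - 1 := by push_cast; ring
  rw [c1, c2]
  ring

end coef


section signs
variable {ν : ℝ} {N i m : ℕ}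

lemma two_rpow_le_four {ν : ℝ} (hν1 : 1 ≤ ν) : (2:ℝ)^(3-ν) ≤ 4 := by
  have h := Real.rpow_le_rpow_of_exponent_le (by norm_num : (1:ℝ) ≤ 2) (by linarith : 3-ν ≤ (2:ℝ))
  rwa [show (2:ℝ)^(2:ℝ) = 4 by
    rw [show (2:ℝ) = ((2:ℕ):ℝ) by norm_num, Real.rpow_natCast]; norm_num] at h

lemma gCoef_diag_nonpos (hν1 : 1 ≤ ν) (hν2 : ν ≤ 2) (hN : 2 ≤ N) (hi1 : 1 ≤ i)
    (hiN : i ≤ N-1) : gCoef ν N i i ≤ 0 := by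
  rw [gCoef_diag_eq hν2 hi1 hiN hN]
  have := two_rpow_le_four hν1
  linarith

lemma gCoef_offdiag_nonneg (hν1 : 1 ≤ ν) (hν2 : ν ≤ 2) (hN : 2 ≤ N)
    (hi1 : 1 ≤ i) (hiN : i ≤ N-1) (hm1 : 1 ≤ m) (hmN : m ≤ N-1) (hmi : m ≠ i) :
    0 ≤ gCoef ν N i m := by
  have hS1 : (1:ℝ) ≤ 3 - ν := by linarith
  have hS2 : (3:ℝ) - ν ≤ 2 := by linarith
  rcases lt_or_gt_of_ne hmi with h | h
  · by_cases he : m = i - 1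
    · subst he
      rw [gCoef_sub_eq hν2 (by omega) hiN hN]
      exact K1_ineq hS1 hS2
    · rw [gCoef_farleft_eq hm1 (by omega)]
      apply Dfn_secdiff_nonneg hS1 hS2
      have : ((m:ℝ)) + 2 ≤ i := by exact_mod_cast (by omega : m + 2 ≤ i)
      linarith
  · by_cases he : m = i + 1
    · subst he
      rw [gCoef_super_eq hν2 hi1 (by omega) hN]
      exact K1_ineq hS1 hS2
    · rw [gCoef_farright_eq hi1 (by omega) hmN hN]
      apply Dfn_secdiff_nonneg hS1 hS2
      have : ((i:ℝ)) + 2 ≤ m := by exact_mod_cast (by omega : i + 2 ≤ m)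
      linarith

lemma gCoef_rowsum_nonpos (hν1 : 1 ≤ ν) (hν2 : ν ≤ 2) (hN : 2 ≤ N)
    (hi1 : 1 ≤ i) (hiN : i ≤ N-1) :
    ∑ m ∈ Finset.Ioo 0 N, gCoef ν N i m ≤ 0 := by
  have hS1 : (1:ℝ) ≤ 3 - ν := by linarith
  have hS2 : (3:ℝ) - ν ≤ 2 := by linarith
  set G : ℕ → ℝ := fun n => Dfn (3-ν) ((n:ℝ)+1) - Dfn (3-ν) (n:ℝ) with hG
  set Φ : ℕ → ℝ := fun m => if m ≤ i-1 then -G (i-m)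
    else if m = i then -G 1 + ((3:ℝ)^(3-ν) - 4*(2:ℝ)^(3-ν) + 7)
    else if m = i+1 then -G 1 + ((3:ℝ)^(3-ν) - 4*(2:ℝ)^(3-ν) + 7) + (2*(2:ℝ)^(3-ν) - 8)
    else G (m-i-1) - 2*G 1 + 2*((3:ℝ)^(3-ν) - 4*(2:ℝ)^(3-ν) + 7) + (2*(2:ℝ)^(3-ν) - 8)
    with hΦ
  have hG1 : G 1 = (3:ℝ)^(3-ν) - 3*(2:ℝ)^(3-ν) + 3 := by
    simp only [hG, Nat.cast_one]
    rw [show (1:ℝ)+1 = 2 by norm_num, Dfn_two, Dfn_one hν2]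
    ring
  have hGle : ∀ n : ℕ, 1 ≤ n → G n ≤ 0 := by
    intro n hn
    have := Dfn_succ_le hS1 hS2 (show (1:ℝ) ≤ (n:ℝ) by exact_mod_cast hn)
    simp only [hG]
    linarith
  have hstep : ∀ m, 1 ≤ m → m ≤ N-1 → gCoef ν N i m = Φ (m+1) - Φ m := by
    intro m hm1 hmN
    rcases Nat.lt_trichotomy m i with h | h | h
    · by_cases he : m = i - 1
      · subst he
        rw [gCoef_sub_eq hν2 (by omega) hiN hN]
        simp only [hΦ]
        rw [if_neg (by omega : ¬ i - 1 + 1 ≤ i - 1), if_pos (by omega : i - 1 + 1 = i),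
          if_pos (by omega : i - 1 ≤ i - 1), show i - (i-1) = 1 by omega]
        ring
      · -- m ≤ i - 2
        rw [gCoef_farleft_eq hm1 (by omega)]
        simp only [hΦ]
        rw [if_pos (by omega : m + 1 ≤ i - 1), if_pos (by omega : m ≤ i - 1)]
        simp only [hG]
        rw [show ((i-(m+1):ℕ):ℝ) = ((i:ℝ) - m) - 1 by
            rw [Nat.cast_sub (by omega)]; push_cast; ring,
          show ((i-m:ℕ):ℝ) = (i:ℝ) - m by rw [Nat.cast_sub (by omega)],
          show ((i:ℝ) - m) - 1 + 1 = (i:ℝ) - m by ring]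
        ring
    · subst h
      rw [gCoef_diag_eq hν2 hi1 hiN hN]
      simp only [hΦ]
      rw [if_neg (by omega : ¬ m + 1 ≤ m - 1), if_neg (by omega : ¬ m + 1 = m),
        if_neg (by omega : ¬ m ≤ m - 1)]
      simp only [if_true]
      ring
    · by_cases he : m = i + 1
      · subst he
        rw [gCoef_super_eq hν2 hi1 (by omega) hN]
        simp only [hΦ]
        rw [if_neg (by omega : ¬ i + 1 + 1 ≤ i - 1), if_neg (by omega : ¬ i + 1 + 1 = i),
          if_neg (by omega : ¬ i + 1 + 1 = i + 1), if_neg (by omega : ¬ i + 1 ≤ i - 1),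
          if_neg (by omega : ¬ i + 1 = i),
          show i + 1 + 1 - i - 1 = 1 by omega]
        simp only [if_true]
        ring
      · -- m ≥ i + 2
        rw [gCoef_farright_eq hi1 (by omega) hmN hN]
        simp only [hΦ]
        rw [if_neg (by omega : ¬ m + 1 ≤ i - 1), if_neg (by omega : ¬ m + 1 = i),
          if_neg (by omega : ¬ m + 1 = i + 1), if_neg (by omega : ¬ m ≤ i - 1),
          if_neg (by omega : ¬ m = i), if_neg (by omega : ¬ m = i + 1),
          show m + 1 - i - 1 = m - i by omega]
        simp only [hG]
        rw [show ((m-i-1:ℕ):ℝ) = ((m:ℝ) - i) - 1 by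
            rw [Nat.cast_sub (by omega), Nat.cast_sub (by omega)]; push_cast; ring,
          show ((m-i:ℕ):ℝ) = (m:ℝ) - i by rw [Nat.cast_sub (by omega)],
          show ((m:ℝ) - i) - 1 + 1 = (m:ℝ) - i by ring]
        ring
  have htel : ∑ m ∈ Finset.Ioo 0 N, gCoef ν N i m = Φ N - Φ 1 := by
    rw [← Finset.Ico_add_one_left_eq_Ioo, zero_add, Finset.sum_Ico_eq_sum_range]
    have hcg : ∀ x ∈ Finset.range (N-1),
        gCoef ν N i (1+x) = Φ (x+1+1) - Φ (x+1) := by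
      intro x hx
      have hx' := Finset.mem_range.1 hx
      rw [hstep (1+x) (by omega) (by omega)]
      congr 2 <;> omega
    rw [Finset.sum_congr rfl hcg, Finset.sum_range_sub (fun x => Φ (x+1)) (N-1)]
    rw [show N-1+1 = N by omega]
  rw [htel]
  have h24 := two_rpow_le_four hν1
  by_cases hi2 : 2 ≤ i
  · by_cases hiN2 : i ≤ N-2
    · simp only [hΦ]
      rw [if_neg (by omega : ¬ N ≤ i - 1), if_neg (by omega : ¬ N = i),
        if_neg (by omega : ¬ N = i + 1), if_pos (by omega : 1 ≤ i - 1)]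
      have e1 : G (N-i-1) ≤ 0 := hGle _ (by omega)
      have e2 : G (i-1) ≤ 0 := hGle _ (by omega)
      linarith [hG1]
    · -- i = N - 1 ≥ 2
      simp only [hΦ]
      rw [if_neg (by omega : ¬ N ≤ i - 1), if_neg (by omega : ¬ N = i),
        if_pos (by omega : N = i + 1), if_pos (by omega : 1 ≤ i - 1)]
      have e2 : G (i-1) ≤ 0 := hGle _ (by omega)
      linarith [hG1]
  · -- i = 1
    have hi : i = 1 := by omega
    subst hi
    by_cases hN2 : N = 2
    · subst hN2
      simp only [hΦ]
      norm_num
      linarith [hG1]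
    · -- N ≥ 3
      simp only [hΦ]
      rw [if_neg (by omega : ¬ N ≤ 1 - 1), if_neg (by omega : ¬ N = 1),
        if_neg (by omega : ¬ N = 1 + 1), if_neg (by omega : ¬ 1 ≤ 1 - 1)]
      simp only [if_true]
      have e1 : G (N-1-1) ≤ 0 := hGle _ (by omega)
      linarith [hG1]

end signs

lemma rpow_midpoint_le_one' {p a b : ℝ} (hp0 : 0 ≤ p) (hp : p ≤ 1) (ha : 0 ≤ a) (hb : 0 ≤ b) :
    a ^ p + b ^ p ≤ 2 * (((a+b)/2) ^ p) := by
  have := (Real.concaveOn_rpow hp0 hp).2 (Set.mem_Ici.2 ha) (Set.mem_Ici.2 hb)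
    (le_of_lt one_half_pos) (le_of_lt one_half_pos) (by norm_num)
  simp only [smul_eq_mul] at this
  calc a^p + b^p = 2 * (1/2 * a^p + 1/2 * b^p) := by ring
    _ ≤ 2 * ((1/2*a + 1/2*b) ^ p) := by linarith
    _ = 2 * (((a+b)/2) ^ p) := by ring_nf

lemma lCoef_pos {γ : ℝ} (h0 : 0 < γ) (h1 : γ < 1) (s : ℕ) : 0 < lCoef γ s := by
  unfold lCoef
  have : (s:ℝ)^(1-γ) < ((s:ℝ)+1)^(1-γ) :=
    Real.rpow_lt_rpow (Nat.cast_nonneg s) (by linarith) (by linarith)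
  linarith

lemma lCoef_anti {γ : ℝ} (h0 : 0 < γ) (h1 : γ < 1) : Antitone (lCoef γ) := by
  apply antitone_nat_of_succ_le
  intro s
  unfold lCoef
  push_cast
  have h := rpow_midpoint_le_one' (p := 1-γ) (by linarith) (by linarith)
    (Nat.cast_nonneg s) (show (0:ℝ) ≤ (s:ℝ)+2 by positivity)
  rw [show ((s:ℝ) + ((s:ℝ)+2))/2 = (s:ℝ)+1 by ring] at h
  rw [show (s:ℝ)+1+1 = (s:ℝ)+2 by ring]
  linarith

lemma lCoef_zero {γ : ℝ} (h0 : 0 < γ) (h1 : γ < 1) : lCoef γ 0 = 1 := by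
  simp [lCoef, Real.zero_rpow (by linarith : (1:ℝ)-γ ≠ 0)]

lemma lCoef_le_one {γ : ℝ} (h0 : 0 < γ) (h1 : γ < 1) (s : ℕ) : lCoef γ s ≤ 1 := by
  rw [← lCoef_zero h0 h1]; exact lCoef_anti h0 h1 (Nat.zero_le s)

lemma lCoef_ge {γ : ℝ} (h0 : 0 < γ) (h1 : γ < 1) {k : ℕ} (hk : 1 ≤ k) :
    (1-γ) / (k:ℝ)^γ ≤ lCoef γ (k-1) := by
  have hK : (1:ℝ) ≤ (k:ℝ) := by exact_mod_cast hk
  have hK0 : (0:ℝ) < k := by linarith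
  have hl : lCoef γ (k-1) = (k:ℝ)^(1-γ) - ((k:ℝ)-1)^(1-γ) := by
    unfold lCoef
    rw [Nat.cast_sub hk]
    norm_num
  have hber : (1 + (-(1/(k:ℝ))))^(1-γ) ≤ 1 + (1-γ) * (-(1/(k:ℝ))) :=
    rpow_one_add_le_one_add_mul_self
      (by rw [neg_le, neg_neg]; exact div_le_one_of_le₀ hK (by positivity))
      (by linarith) (by linarith)
  have hstep : ((k:ℝ)-1)^(1-γ) ≤ (k:ℝ)^(1-γ) * (1 - (1-γ)/(k:ℝ)) := by
    have hkk : (k:ℝ) - 1 = (k:ℝ) * (1 + (-(1/(k:ℝ)))) := by field_simp; ring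
    rw [hkk, Real.mul_rpow hK0.le (by nlinarith [hber])]
    · apply mul_le_mul_of_nonneg_left _ (Real.rpow_nonneg hK0.le _)
      calc (1 + (-(1/(k:ℝ))))^(1-γ) ≤ 1 + (1-γ) * (-(1/(k:ℝ))) := hber
        _ = 1 - (1-γ)/(k:ℝ) := by ring
  have hfin : (k:ℝ)^(1-γ) * ((1-γ)/(k:ℝ)) = (1-γ) / (k:ℝ)^γ := by
    rw [Real.rpow_sub hK0, Real.rpow_one]
    have hkγ : (0:ℝ) < (k:ℝ)^γ := Real.rpow_pos_of_pos hK0 γ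
    field_simp
  rw [hl]
  nlinarith [Real.rpow_nonneg hK0.le (1-γ)]

lemma lCoef_telescope (γ : ℝ) (n : ℕ) :
    ∑ s ∈ Finset.range n, (lCoef γ s - lCoef γ (s+1)) = lCoef γ 0 - lCoef γ n :=
  Finset.sum_range_sub' (lCoef γ) n

lemma abs_le_maxAbs {N i : ℕ} (hi : i ≤ N) (v : ℕ → ℝ) : |v i| ≤ maxAbs N v := by
  unfold maxAbs
  exact Finset.le_sup' (fun j => |v j|) (Finset.mem_range.2 (by omega))

lemma maxAbs_nonneg (N : ℕ) (v : ℕ → ℝ) : 0 ≤ maxAbs N v :=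
  le_trans (abs_nonneg (v 0)) (abs_le_maxAbs (Nat.zero_le N) v)

lemma maxAbs_exists (N : ℕ) (v : ℕ → ℝ) : ∃ i, i ≤ N ∧ maxAbs N v = |v i| := by
  obtain ⟨i, hi, h⟩ := Finset.exists_mem_eq_sup' (Finset.nonempty_range_add_one (n := N))
    (fun i => |v i|)
  exact ⟨i, Nat.lt_succ_iff.1 (Finset.mem_range.1 hi), h⟩

set_option maxHeartbeats 2000000 in
/-- Theorem 4.1 (case `0 < γ < 1`): convergence of the one-dimensional implicit scheme.
Here `ε k i` is the error `u(x_i,t_k) - u^k_i` and `R k i` the local truncation error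
`R^k_i`, with `Rmax` the maximum of `|R^k_i|`. -/
theorem implicit_1d_convergence (γ α : ℝ) (hγ : γ ∈ Set.Ioo (0:ℝ) 1)
    (hα : α ∈ Set.Ioc (1:ℝ) 2)
    (N Nt : ℕ) (hN : 2 ≤ N) (hNt : 1 ≤ Nt)
    (τ Δx : ℝ) (hτ : 0 < τ) (hΔx : 0 < Δx)
    (c : ℕ → ℕ → ℝ)
    (hc : ∀ i k : ℕ, 1 ≤ i → i ≤ N - 1 → 1 ≤ k → k ≤ Nt → 0 ≤ c i k)
    (ω : ℕ → ℕ → ℝ)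
    (hω : ∀ i k : ℕ, 1 ≤ i → i ≤ N - 1 → 1 ≤ k → k ≤ Nt →
      ω i k = -(Real.Gamma (2 - γ) * τ ^ γ * kappa α * c i k) / (Real.Gamma (4 - α) * Δx ^ α))
    (R : ℕ → ℕ → ℝ) (Rmax : ℝ)
    (hRmax : IsGreatest
      {x : ℝ | ∃ i k : ℕ, 1 ≤ i ∧ i ≤ N - 1 ∧ 1 ≤ k ∧ k ≤ Nt ∧ x = |R k i|} Rmax)
    (ε : ℕ → ℕ → ℝ)
    (hinit : ∀ i : ℕ, i ≤ N → ε 0 i = 0)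
    (hbc : ∀ k : ℕ, 1 ≤ k → k ≤ Nt → ε k 0 = 0 ∧ ε k N = 0)
    (hscheme : ∀ i k : ℕ, 1 ≤ i → i ≤ N - 1 → k + 1 ≤ Nt →
      (1 - ω i (k + 1) * gCoef α N i i) * ε (k + 1) i
        - ω i (k + 1) * ∑ m ∈ (Finset.range (N + 1)).erase i, gCoef α N i m * ε (k + 1) m
      = (∑ s ∈ Finset.range k, (lCoef γ s - lCoef γ (s + 1)) * ε (k - s) i)
        + R (k + 1) i) :
    (∀ k : ℕ, 1 ≤ k → k ≤ Nt →
      maxAbs N (ε k) ≤ Rmax / lCoef γ (k - 1) ∧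
      Rmax / lCoef γ (k - 1) ≤ (k : ℝ) ^ γ / (1 - γ) * Rmax) ∧
    (∀ T C : ℝ, 0 < T → (Nt : ℝ) * τ ≤ T → 0 < C →
      (∀ i k : ℕ, 1 ≤ i → i ≤ N - 1 → 1 ≤ k → k ≤ Nt →
        |R k i| ≤ C * τ ^ γ * (τ ^ (2 - γ) + Δx ^ 2)) →
      ∀ k : ℕ, k ≤ Nt →
        maxAbs N (ε k) ≤ C * T ^ γ / (1 - γ) * (τ ^ (2 - γ) + Δx ^ 2)) := by
  obtain ⟨hγ0, hγ1⟩ := hγ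
  obtain ⟨hα1, hα2⟩ := hα
  obtain ⟨i₀, k₀, hi₀1, hi₀N, hk₀1, hk₀Nt, hRval⟩ := hRmax.1
  have hRmax0 : 0 ≤ Rmax := by rw [hRval]; exact abs_nonneg _
  have hRle : ∀ i k : ℕ, 1 ≤ i → i ≤ N - 1 → 1 ≤ k → k ≤ Nt → |R k i| ≤ Rmax :=
    fun i k h1 h2 h3 h4 => hRmax.2 ⟨i, k, h1, h2, h3, h4, rfl⟩
  have hω0 : ∀ i k : ℕ, 1 ≤ i → i ≤ N - 1 → 1 ≤ k → k ≤ Nt → 0 ≤ ω i k := by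
    intro i k h1 h2 h3 h4
    rw [hω i k h1 h2 h3 h4]
    have hΓ1 : 0 < Real.Gamma (2 - γ) := Real.Gamma_pos_of_pos (by linarith)
    have hΓ2 : 0 < Real.Gamma (4 - α) := Real.Gamma_pos_of_pos (by linarith)
    have hτγ : 0 < τ ^ γ := Real.rpow_pos_of_pos hτ γ
    have hΔα : 0 < Δx ^ α := Real.rpow_pos_of_pos hΔx α
    have hπ := Real.pi_pos
    have hκ : kappa α < 0 := by
      unfold kappa
      have hcos : Real.cos (α * Real.pi / 2) < 0 := by
        apply Real.cos_neg_of_pi_div_two_lt_of_lt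
        · nlinarith
        · nlinarith
      exact div_neg_of_pos_of_neg one_pos (by linarith)
    apply div_nonneg _ (le_of_lt (mul_pos hΓ2 hΔα))
    have hcik := hc i k h1 h2 h3 h4
    have h9 : Real.Gamma (2 - γ) * τ ^ γ * kappa α ≤ 0 :=
      mul_nonpos_iff.2 (Or.inl ⟨(mul_pos hΓ1 hτγ).le, hκ.le⟩)
    have : Real.Gamma (2 - γ) * τ ^ γ * kappa α * c i k ≤ 0 :=
      mul_nonpos_iff.2 (Or.inr ⟨h9, hcik⟩)
    linarith
  have key : ∀ k : ℕ, 1 ≤ k → k ≤ Nt → maxAbs N (ε k) ≤ Rmax / lCoef γ (k-1) := by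
    intro k
    induction k using Nat.strong_induction_on with
    | _ k IH =>
      intro hk1 hkNt
      have hlpos := lCoef_pos hγ0 hγ1 (k-1)
      obtain ⟨i0, hi0N, hEeq⟩ := maxAbs_exists N (ε k)
      by_cases hEz : ε k i0 = 0
      · rw [hEeq, hEz]
        simpa using div_nonneg hRmax0 hlpos.le
      have hi01 : 1 ≤ i0 := by
        by_contra h
        exact hEz (by rw [show i0 = 0 by omega]; exact (hbc k hk1 hkNt).1)
      have hi0N1 : i0 ≤ N - 1 := by
        by_contra h
        exact hEz (by rw [show i0 = N by omega]; exact (hbc k hk1 hkNt).2)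
      obtain ⟨n, rfl⟩ : ∃ n, k = n + 1 := ⟨k - 1, by omega⟩
      have hsch := hscheme i0 n hi01 hi0N1 (by omega)
      set W := ω i0 (n+1) with hWdef
      have hW0 : 0 ≤ W := hω0 i0 (n+1) hi01 hi0N1 (by omega) (by omega)
      have hE0' : 0 ≤ maxAbs N (ε (n+1)) := maxAbs_nonneg N _
      set E := maxAbs N (ε (n+1)) with hEdef
      have hsum_eq : ∑ m ∈ (Finset.range (N+1)).erase i0, gCoef α N i0 m * ε (n+1) m
          = ∑ m ∈ (Finset.Ioo 0 N).erase i0, gCoef α N i0 m * ε (n+1) m := by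
        symm
        apply Finset.sum_subset
        · intro m hm
          simp only [Finset.mem_erase, Finset.mem_Ioo, Finset.mem_range] at *
          exact ⟨hm.1, by omega⟩
        · intro m hm hnm
          simp only [Finset.mem_erase, Finset.mem_Ioo, Finset.mem_range] at hm hnm
          have h3 : ¬(0 < m ∧ m < N) := fun hcon => hnm ⟨hm.1, hcon⟩
          have : m = 0 ∨ m = N := by omega
          rcases this with h | h
          · rw [h, (hbc (n+1) (by omega) hkNt).1, mul_zero]
          · rw [h, (hbc (n+1) (by omega) hkNt).2, mul_zero]
      have habs : |∑ m ∈ (Finset.Ioo 0 N).erase i0, gCoef α N i0 m * ε (n+1) m|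
          ≤ ∑ m ∈ (Finset.Ioo 0 N).erase i0, gCoef α N i0 m * E := by
        refine (Finset.abs_sum_le_sum_abs _ _).trans (Finset.sum_le_sum ?_)
        intro m hm
        have hm' := Finset.mem_erase.1 hm
        have hmIoo := Finset.mem_Ioo.1 hm'.2
        have hg0 : 0 ≤ gCoef α N i0 m :=
          gCoef_offdiag_nonneg (by linarith) (by linarith) hN hi01 hi0N1
            (by omega) (by omega) hm'.1
        rw [abs_mul, abs_of_nonneg hg0]
        exact mul_le_mul_of_nonneg_left (abs_le_maxAbs (by omega) _) hg0
      have hrow : gCoef α N i0 i0 + ∑ m ∈ (Finset.Ioo 0 N).erase i0, gCoef α N i0 m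
          = ∑ m ∈ Finset.Ioo 0 N, gCoef α N i0 m :=
        Finset.add_sum_erase _ _ (Finset.mem_Ioo.2 ⟨by omega, by omega⟩)
      have hrow0 : ∑ m ∈ Finset.Ioo 0 N, gCoef α N i0 m ≤ 0 :=
        gCoef_rowsum_nonpos (by linarith) (by linarith) hN hi01 hi0N1
      have hgii : gCoef α N i0 i0 ≤ 0 :=
        gCoef_diag_nonpos (by linarith) (by linarith) hN hi01 hi0N1
      have hln := lCoef_pos hγ0 hγ1 n
      have hRHS : |(∑ s ∈ Finset.range n, (lCoef γ s - lCoef γ (s+1)) * ε (n-s) i0)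
            + R (n+1) i0| ≤ (1 - lCoef γ n) * (Rmax / lCoef γ n) + Rmax := by
        refine (abs_add_le _ _).trans
          (add_le_add ?_ (hRle i0 (n+1) hi01 hi0N1 (by omega) (by omega)))
        refine (Finset.abs_sum_le_sum_abs _ _).trans ?_
        have hterm : ∀ s ∈ Finset.range n, |(lCoef γ s - lCoef γ (s+1)) * ε (n-s) i0|
            ≤ (lCoef γ s - lCoef γ (s+1)) * (Rmax / lCoef γ n) := by
          intro s hs
          have hs' := Finset.mem_range.1 hs
          have hl0 : 0 ≤ lCoef γ s - lCoef γ (s+1) :=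
            sub_nonneg.2 (lCoef_anti hγ0 hγ1 (Nat.le_succ s))
          rw [abs_mul, abs_of_nonneg hl0]
          apply mul_le_mul_of_nonneg_left _ hl0
          have h1 : |ε (n-s) i0| ≤ maxAbs N (ε (n-s)) := abs_le_maxAbs (by omega) _
          have h2 := IH (n-s) (by omega) (by omega) (by omega)
          have h3 : Rmax / lCoef γ (n-s-1) ≤ Rmax / lCoef γ n := by
            rw [div_eq_mul_one_div Rmax, div_eq_mul_one_div Rmax (lCoef γ n)]
            exact mul_le_mul_of_nonneg_left
              (one_div_le_one_div_of_le hln (lCoef_anti hγ0 hγ1 (by omega))) hRmax0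
          linarith
        calc ∑ s ∈ Finset.range n, |(lCoef γ s - lCoef γ (s+1)) * ε (n-s) i0|
            ≤ ∑ s ∈ Finset.range n, (lCoef γ s - lCoef γ (s+1)) * (Rmax / lCoef γ n) :=
              Finset.sum_le_sum hterm
          _ = (∑ s ∈ Finset.range n, (lCoef γ s - lCoef γ (s+1))) * (Rmax / lCoef γ n) := by
              rw [← Finset.sum_mul]
          _ = (1 - lCoef γ n) * (Rmax / lCoef γ n) := by
              rw [lCoef_telescope, lCoef_zero hγ0 hγ1]
      have hchain : E ≤ (1 - lCoef γ n) * (Rmax / lCoef γ n) + Rmax := by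
        have hsm : ∑ m ∈ (Finset.Ioo 0 N).erase i0, gCoef α N i0 m * E
            = (∑ m ∈ (Finset.Ioo 0 N).erase i0, gCoef α N i0 m) * E :=
          (Finset.sum_mul _ _ _).symm
        have h4 : 0 ≤ -(W * ((gCoef α N i0 i0
            + ∑ m ∈ (Finset.Ioo 0 N).erase i0, gCoef α N i0 m) * E)) := by
          rw [hrow]
          have h5 : (∑ m ∈ Finset.Ioo 0 N, gCoef α N i0 m) * E ≤ 0 :=
            mul_nonpos_iff.2 (Or.inr ⟨hrow0, hE0'⟩)
          exact neg_nonneg.2 (mul_nonpos_iff.2 (Or.inl ⟨hW0, h5⟩))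
        have t1 : E ≤ (1 - W * gCoef α N i0 i0) * E
            - W * (∑ m ∈ (Finset.Ioo 0 N).erase i0, gCoef α N i0 m * E) := by
          rw [hsm]
          linarith [h4]
        have h5 : |(1 - W * gCoef α N i0 i0) * ε (n+1) i0| = (1 - W * gCoef α N i0 i0) * E := by
          have h50 : (0:ℝ) ≤ 1 - W * gCoef α N i0 i0 := by
            nlinarith [mul_nonneg hW0 (neg_nonneg.2 hgii)]
          rw [abs_mul, abs_of_nonneg h50, hEeq]
        have h6 : |W * ∑ m ∈ (Finset.Ioo 0 N).erase i0, gCoef α N i0 m * ε (n+1) m|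
            ≤ W * ∑ m ∈ (Finset.Ioo 0 N).erase i0, gCoef α N i0 m * E := by
          rw [abs_mul, abs_of_nonneg hW0]
          exact mul_le_mul_of_nonneg_left habs hW0
        have t2 : (1 - W * gCoef α N i0 i0) * E
            - W * (∑ m ∈ (Finset.Ioo 0 N).erase i0, gCoef α N i0 m * E)
            ≤ |(1 - W * gCoef α N i0 i0) * ε (n+1) i0
              - W * ∑ m ∈ (Finset.Ioo 0 N).erase i0, gCoef α N i0 m * ε (n+1) m| := by
          have := abs_sub_abs_le_abs_sub ((1 - W * gCoef α N i0 i0) * ε (n+1) i0)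
            (W * ∑ m ∈ (Finset.Ioo 0 N).erase i0, gCoef α N i0 m * ε (n+1) m)
          rw [h5] at this
          linarith
        rw [hsum_eq] at hsch
        calc E ≤ (1 - W * gCoef α N i0 i0) * E
              - W * (∑ m ∈ (Finset.Ioo 0 N).erase i0, gCoef α N i0 m * E) := t1
          _ ≤ |(1 - W * gCoef α N i0 i0) * ε (n+1) i0
              - W * ∑ m ∈ (Finset.Ioo 0 N).erase i0, gCoef α N i0 m * ε (n+1) m| := t2
          _ = |(∑ s ∈ Finset.range n, (lCoef γ s - lCoef γ (s+1)) * ε (n-s) i0)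
              + R (n+1) i0| := by rw [hsch]
          _ ≤ (1 - lCoef γ n) * (Rmax / lCoef γ n) + Rmax := hRHS
      have hfin : (1 - lCoef γ n) * (Rmax / lCoef γ n) + Rmax = Rmax / lCoef γ n := by
        field_simp
        ring
      rw [Nat.add_sub_cancel]
      linarith [hchain, hfin.le, hfin.ge]
  have second : ∀ k : ℕ, 1 ≤ k → k ≤ Nt →
      Rmax / lCoef γ (k-1) ≤ (k:ℝ)^γ/(1-γ) * Rmax := by
    intro k hk1 hkNt
    have hl := lCoef_ge hγ0 hγ1 hk1
    have hlpos := lCoef_pos hγ0 hγ1 (k-1)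
    have hk0 : (0:ℝ) < (k:ℝ) := by exact_mod_cast hk1
    have hkγ : 0 < (k:ℝ)^γ := Real.rpow_pos_of_pos hk0 γ
    have hbpos : 0 < (1-γ)/(k:ℝ)^γ := div_pos (by linarith) hkγ
    have h1 : Rmax / lCoef γ (k-1) ≤ Rmax / ((1-γ)/(k:ℝ)^γ) := by
      rw [div_eq_mul_one_div Rmax, div_eq_mul_one_div Rmax ((1-γ)/(k:ℝ)^γ)]
      exact mul_le_mul_of_nonneg_left (one_div_le_one_div_of_le hbpos hl) hRmax0
    have h2 : Rmax / ((1-γ)/(k:ℝ)^γ) = (k:ℝ)^γ/(1-γ) * Rmax := by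
      field_simp
    linarith
  refine ⟨fun k hk1 hkNt => ⟨key k hk1 hkNt, second k hk1 hkNt⟩, ?_⟩
  intro T C hT hNtT hC hRbound k hkNt
  have hX0 : 0 ≤ τ^(2-γ) + Δx^2 := by
    have := Real.rpow_nonneg hτ.le (2-γ)
    nlinarith [sq_nonneg Δx]
  have hTγ : 0 ≤ T^γ := Real.rpow_nonneg hT.le γ
  rcases Nat.eq_zero_or_pos k with rfl | hk1
  · have hz : maxAbs N (ε 0) = 0 := by
      apply le_antisymm _ (maxAbs_nonneg N _)
      unfold maxAbs
      have hb : ∀ j ∈ Finset.range (N+1), |ε 0 j| ≤ 0 := by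
        intro j hj
        have hj' := Finset.mem_range.1 hj
        rw [hinit j (by omega), abs_zero]
      exact Finset.sup'_le _ _ hb
    rw [hz]
    exact mul_nonneg (div_nonneg (mul_nonneg hC.le hTγ) (by linarith)) hX0
  · have h1 := (key k hk1 hkNt).trans (second k hk1 hkNt)
    have hRmax_le : Rmax ≤ C * τ^γ * (τ^(2-γ) + Δx^2) := by
      rw [hRval]; exact hRbound i₀ k₀ hi₀1 hi₀N hk₀1 hk₀Nt
    have hkT : (k:ℝ)^γ * τ^γ ≤ T^γ := by
      rw [← Real.mul_rpow (Nat.cast_nonneg k) hτ.le]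
      apply Real.rpow_le_rpow (by positivity) _ hγ0.le
      calc (k:ℝ)*τ ≤ (Nt:ℝ)*τ :=
          mul_le_mul_of_nonneg_right (by exact_mod_cast hkNt) hτ.le
        _ ≤ T := hNtT
    have hcoef : 0 ≤ (k:ℝ)^γ/(1-γ) :=
      div_nonneg (Real.rpow_nonneg (Nat.cast_nonneg k) γ) (by linarith)
    have hstep : (k:ℝ)^γ/(1-γ) * Rmax ≤ C * T^γ / (1-γ) * (τ^(2-γ) + Δx^2) := by
      have e1 : (k:ℝ)^γ/(1-γ) * Rmax ≤ (k:ℝ)^γ/(1-γ) * (C * τ^γ * (τ^(2-γ) + Δx^2)) :=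
        mul_le_mul_of_nonneg_left hRmax_le hcoef
      have e2 : (k:ℝ)^γ/(1-γ) * (C * τ^γ * (τ^(2-γ) + Δx^2))
          = C * ((k:ℝ)^γ * τ^γ) * (τ^(2-γ) + Δx^2) * (1/(1-γ)) := by ring
      have e3 : C * ((k:ℝ)^γ * τ^γ) * (τ^(2-γ) + Δx^2) * (1/(1-γ))
          ≤ C * T^γ * (τ^(2-γ) + Δx^2) * (1/(1-γ)) := by
        apply mul_le_mul_of_nonneg_right _ (one_div_nonneg.2 (by linarith))
        apply mul_le_mul_of_nonneg_right _ hX0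
        exact mul_le_mul_of_nonneg_left hkT hC.le
      have e4 : C * T^γ * (τ^(2-γ) + Δx^2) * (1/(1-γ))
          = C * T^γ / (1-γ) * (τ^(2-γ) + Δx^2) := by ring
      linarith
    linarith
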